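/- Define synaptic weights W : ℕ × ℕ → ℝ (indices i ≥ 1) by W_{i,i+1} = −i, W_{i,i+2} = i, and W_{ij} = 0 otherwise. Then: (1) for every i ≥ 1, ∑_{j≠i} max(−W_{ij}, 0) = i = ∑_{j≠i} max(W_{ij}, 0), so condition (A) (the negative weights dominate the positive ones) holds; (2) for every i ≥ 3, ∑_{j≠i} |W_{ji}| = 2i − 3; in particular sup_{i} ∑_{j≠i} |W_{ji}| = ∞, so the Dobrushin condition sup_i ∑_j |W_{ji}| < ∞ fails. -/
import Mathlib

lemma tsum_subtype_single {i a : ℕ} (f : ℕ → ℝ) (ha : a ≠ i)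
    (h0 : ∀ j, j ≠ a → f j = 0) :
    ∑' j : {j : ℕ // j ≠ i}, f j.1 = f a := by
  refine tsum_eq_single (⟨a, ha⟩ : {j : ℕ // j ≠ i}) ?_
  rintro ⟨b, hb⟩ hne
  exact h0 b (fun h => hne (by simp [h]))

lemma tsum_subtype_pair {i a b : ℕ} (f : ℕ → ℝ) (ha : a ≠ i) (hb : b ≠ i)
    (hab : a ≠ b) (h0 : ∀ j, j ≠ a → j ≠ b → f j = 0) :
    ∑' j : {j : ℕ // j ≠ i}, f j.1 = f a + f b := by
  have hs : ∑' j : {j : ℕ // j ≠ i}, f j.1 =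
      ∑ j ∈ ({⟨a, ha⟩, ⟨b, hb⟩} : Finset {j : ℕ // j ≠ i}), f j.1 := by
    refine tsum_eq_sum ?_
    rintro ⟨c, hc⟩ hcs
    simp only [Finset.mem_insert, Finset.mem_singleton] at hcs
    push_neg at hcs
    exact h0 c (fun h => hcs.1 (by simp [h])) (fun h => hcs.2 (by simp [h]))
  rw [hs, Finset.sum_pair (by simp [hab])]

/- STATEMENT 12: Example 1 of the paper: the weights W_{i,i+1} = −i, W_{i,i+2} = i
(and 0 otherwise) satisfy condition (A) but violate the Dobrushin condition. -/
theorem example1_condition_A_not_Dobrushin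
    (W : ℕ → ℕ → ℝ)
    (hW : ∀ i j, W i j =
      if j = i + 1 then -(i : ℝ) else if j = i + 2 then (i : ℝ) else 0) :
    (∀ i : ℕ, 1 ≤ i →
      (∑' j : {j : ℕ // j ≠ i}, max (-(W i j.1)) 0) = (i : ℝ) ∧
      (∑' j : {j : ℕ // j ≠ i}, max (W i j.1) 0) = (i : ℝ)) ∧
    (∀ i : ℕ, 3 ≤ i →
      (∑' j : {j : ℕ // j ≠ i}, |W j.1 i|) = 2 * (i : ℝ) - 3) ∧
    ¬ BddAbove (Set.range fun i : ℕ => ∑' j : {j : ℕ // j ≠ i}, |W j.1 i|) := by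
  have hDob : ∀ i : ℕ, 3 ≤ i →
      (∑' j : {j : ℕ // j ≠ i}, |W j.1 i|) = 2 * (i : ℝ) - 3 := by
    intro i hi
    obtain ⟨k, rfl⟩ : ∃ k, i = k + 3 := ⟨i - 3, by omega⟩
    rw [tsum_subtype_pair (fun j => |W j (k + 3)|) (a := k + 2) (b := k + 1)
        (by omega) (by omega) (by omega)
        (fun j hja hjb => by
          show |W j (k + 3)| = 0
          rw [hW, if_neg (by omega), if_neg (by omega)]
          simp)]
    rw [hW, hW, if_pos (by omega), if_neg (by omega), if_pos (by omega)]
    rw [abs_neg, abs_of_nonneg (by positivity), abs_of_nonneg (by positivity)]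
    push_cast
    ring
  refine ⟨?_, hDob, ?_⟩
  · intro i hi
    constructor
    · rw [tsum_subtype_single (fun j => max (-(W i j)) 0) (a := i + 1) (by omega)
          (fun j hj => by
            show max (-(W i j)) 0 = 0
            rw [hW, if_neg hj]
            split_ifs
            · exact max_eq_right (neg_nonpos.mpr (Nat.cast_nonneg i))
            · simp)]
      rw [hW, if_pos rfl, neg_neg]
      exact max_eq_left (Nat.cast_nonneg i)
    · rw [tsum_subtype_single (fun j => max (W i j) 0) (a := i + 2) (by omega)
          (fun j hj => by
            show max (W i j) 0 = 0
            rw [hW]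
            split_ifs with h1
            · exact max_eq_right (neg_nonpos.mpr (Nat.cast_nonneg i))
            · simp)]
      rw [hW, if_neg (by omega), if_pos rfl]
      exact max_eq_left (Nat.cast_nonneg i)
  · rintro ⟨M, hM⟩
    obtain ⟨n, hn⟩ := exists_nat_gt M
    have h1 : (∑' j : {j : ℕ // j ≠ n + 3}, |W j.1 (n + 3)|) ∈
        Set.range fun i : ℕ => ∑' j : {j : ℕ // j ≠ i}, |W j.1 i| := ⟨n + 3, rfl⟩
    have h2 := hM h1
    rw [hDob (n + 3) (by omega)] at h2
    have : (0 : ℝ) ≤ n := Nat.cast_nonneg n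
    push_cast at h2
    linarith
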